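/- Suppose M is odd and γ_m ≠ 0 for every edge m (the couplings J_m are arbitrary, possibly non-uniform). Then the kernel of H_γ + H_J restricted to the single-fermion sector W₁^↑ has dimension at least 2^{M−1}; i.e. the Q = 1 sector of the extended quantum breakdown model with odd chain length possesses at least 2^{M−1} exact zero modes, a number growing exponentially with the system size. -/

import Mathlib

open scoped BigOperators

namespace QuantumBreakdown

/-- Basis index: pairs of an occupation configuration and a spin configuration. -/
abbrev Cfg (M : ℕ) := (Fin M → Bool) × (Fin M → Bool)

/-- The Hilbert space `V_M`. -/
abbrev V (M : ℕ) := Cfg M → ℂ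

/-- The basis vector `e_{n,s}`. -/
noncomputable def e (M : ℕ) (p : Cfg M) : V M := Pi.single p 1

/-- The linear operator determined by prescribed images of the basis vectors. -/
noncomputable def mkOp (M : ℕ) (f : Cfg M → V M) : V M →ₗ[ℂ] V M :=
  (Pi.basisFun ℂ (Cfg M)).constr ℂ f

/-- The left site of edge `m`. -/
def sL (M : ℕ) (m : Fin (M - 1)) : Fin M := ⟨m.1, by have := m.2; omega⟩

/-- The right site of edge `m`. -/
def sR (M : ℕ) (m : Fin (M - 1)) : Fin M := ⟨m.1 + 1, by have := m.2; omega⟩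

/-- Move a fermion from site `a` to site `b`. -/
def hop (M : ℕ) (n : Fin M → Bool) (a b : Fin M) : Fin M → Bool :=
  Function.update (Function.update n a false) b true

/-- The hopping term `H_γ`. -/
noncomputable def Hgam (M : ℕ) (γ : Fin (M - 1) → ℝ) : V M →ₗ[ℂ] V M :=
  mkOp M fun p =>
    -∑ m : Fin (M - 1), (γ m : ℂ) •
      ((if p.1 (sL M m) = true ∧ p.1 (sR M m) = false then
          e M (hop M p.1 (sL M m) (sR M m), p.2) else 0)
        +
       (if p.1 (sR M m) = true ∧ p.1 (sL M m) = false then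
          e M (hop M p.1 (sR M m) (sL M m), p.2) else 0))

/-- The breakdown interaction `H_J`. -/
noncomputable def HJop (M : ℕ) (J : Fin (M - 1) → ℝ) : V M →ₗ[ℂ] V M :=
  mkOp M fun p =>
    ∑ m : Fin (M - 1), (J m : ℂ) •
      ((if p.1 (sL M m) = true ∧ p.1 (sR M m) = false ∧ p.2 (sR M m) = false then
          e M (hop M p.1 (sL M m) (sR M m), Function.update p.2 (sR M m) true) else 0)
        +
       (if p.1 (sR M m) = true ∧ p.1 (sL M m) = false ∧ p.2 (sR M m) = true then
          e M (hop M p.1 (sR M m) (sL M m), Function.update p.2 (sR M m) false) else 0))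

/-- The on-site potential `H_μ`. -/
noncomputable def Hmu (M : ℕ) (μ : Fin M → ℝ) : V M →ₗ[ℂ] V M :=
  mkOp M fun p => (∑ m : Fin M, if p.1 m = true then (μ m : ℂ) else 0) • e M p

/-- Pauli `σ^x` at site `m`. -/
noncomputable def sigx (M : ℕ) (m : Fin M) : V M →ₗ[ℂ] V M :=
  mkOp M fun p => e M (p.1, Function.update p.2 m (!p.2 m))

/-- Pauli `σ^y` at site `m`. -/
noncomputable def sigy (M : ℕ) (m : Fin M) : V M →ₗ[ℂ] V M :=
  mkOp M fun p =>
    (if p.2 m = true then Complex.I else -Complex.I) • e M (p.1, Function.update p.2 m (!p.2 m))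

/-- Pauli `σ^z` at site `m`. -/
noncomputable def sigz (M : ℕ) (m : Fin M) : V M →ₗ[ℂ] V M :=
  mkOp M fun p => (if p.2 m = true then (1 : ℂ) else -1) • e M p

/-- The magnetic field term `H_h`. -/
noncomputable def Hh (M : ℕ) (hx hy hz : Fin M → ℝ) : V M →ₗ[ℂ] V M :=
  ∑ m : Fin M, ((hx m : ℂ) • sigx M m + (hy m : ℂ) • sigy M m + (hz m : ℂ) • sigz M m)

/-- Number of occupied sites of an occupation configuration. -/
def nOcc (M : ℕ) (n : Fin M → Bool) : ℕ := (Finset.univ.filter fun m => n m = true).card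

/-- The number operator `N`. -/
noncomputable def numOp (M : ℕ) : V M →ₗ[ℂ] V M :=
  mkOp M fun p => (nOcc M p.1 : ℂ) • e M p

/-- The charge-`Q` sector `W_Q`. -/
noncomputable def sector (M Q : ℕ) : Submodule ℂ (V M) :=
  Submodule.span ℂ { v | ∃ p : Cfg M, nOcc M p.1 = Q ∧ v = e M p }

/-- The charge-`Q` sector with first spin up, `W_Q^↑`. -/
noncomputable def sectorUp (M : ℕ) (hM : 0 < M) (Q : ℕ) : Submodule ℂ (V M) :=
  Submodule.span ℂ { v | ∃ p : Cfg M, nOcc M p.1 = Q ∧ p.2 ⟨0, hM⟩ = true ∧ v = e M p }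

end QuantumBreakdown

open QuantumBreakdown

set_option maxHeartbeats 1000000
set_option synthInstance.maxHeartbeats 400000

namespace QB10
open QuantumBreakdown Finset

lemma mkOp_apply_e (M : ℕ) (f : Cfg M → V M) (p : Cfg M) : mkOp M f (e M p) = f p := by
  rw [e, ← Pi.basisFun_apply, mkOp, Module.Basis.constr_basis]

def par {M : ℕ} (n : Fin M → Bool) : ZMod 2 :=
  ∑ m : Fin M, if n m = true then (m.1 : ZMod 2) else 0

lemma sum_ite_update {M : ℕ} {β : Type} [AddCommGroup β] (n : Fin M → Bool) (a : Fin M)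
    (v : Bool) (X : Fin M → β) :
    ∑ m : Fin M, (if Function.update n a v m = true then X m else 0)
      = (∑ m : Fin M, if n m = true then X m else 0)
        + (if v = true then X a else 0) - (if n a = true then X a else 0) := by
  have h1 : (fun m => if Function.update n a v m = true then X m else 0)
      = Function.update (fun m => if n m = true then X m else 0) a (if v = true then X a else 0) := by
    funext m
    rcases eq_or_ne m a with rfl | h
    · simp
    · simp [Function.update_apply, h]
  rw [h1, Finset.sum_update_of_mem (Finset.mem_univ a)]
  have h2 : ∑ m : Fin M, (if n m = true then X m else 0)
      = (if n a = true then X a else 0) + ∑ m ∈ Finset.univ \ {a}, (if n m = true then X m else 0) := by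
    rw [← Finset.erase_eq, ← Finset.add_sum_erase _ _ (Finset.mem_univ a)]
  rw [h2]; abel

lemma sum_hop {M : ℕ} {β : Type} [AddCommGroup β] {n : Fin M → Bool} {a b : Fin M}
    (X : Fin M → β) (h1 : n a = true) (h2 : n b = false) (hab : a ≠ b) :
    ∑ m : Fin M, (if hop M n a b m = true then X m else 0)
      = (∑ m : Fin M, if n m = true then X m else 0) + X b - X a := by
  rw [hop, sum_ite_update, sum_ite_update]
  have : Function.update n a false b = false := by
    rw [Function.update_apply, if_neg (Ne.symm hab ∘ id)]; exact h2
  simp [h1, this]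
  abel

lemma nOcc_eq_sum {M : ℕ} (n : Fin M → Bool) :
    (nOcc M n : ℤ) = ∑ m : Fin M, (if n m = true then (1 : ℤ) else 0) := by
  rw [nOcc, Finset.card_filter]
  push_cast
  simp

lemma nOcc_hop {M : ℕ} {n : Fin M → Bool} {a b : Fin M}
    (h1 : n a = true) (h2 : n b = false) (hab : a ≠ b) :
    nOcc M (hop M n a b) = nOcc M n := by
  have hs := sum_hop (fun _ => (1 : ℤ)) h1 h2 hab
  have h3 : (nOcc M (hop M n a b) : ℤ) = (nOcc M n : ℤ) := by
    rw [nOcc_eq_sum, nOcc_eq_sum, hs]; ring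
  exact_mod_cast h3

lemma par_hop {M : ℕ} {n : Fin M → Bool} {a b : Fin M}
    (h1 : n a = true) (h2 : n b = false) (hab : a ≠ b) :
    par (hop M n a b) = par n + (b.1 : ZMod 2) - (a.1 : ZMod 2) :=
  sum_hop (fun m => (m.1 : ZMod 2)) h1 h2 hab

/-- configurations with one fermion, first spin up, given position parity -/
def Sc (M : ℕ) (h : 0 < M) (c : ZMod 2) : Finset (Cfg M) :=
  Finset.univ.filter (fun p => nOcc M p.1 = 1 ∧ p.2 ⟨0, h⟩ = true ∧ par p.1 = c)

lemma sLR_ne {M : ℕ} (m : Fin (M - 1)) : sL M m ≠ sR M m := by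
  intro h
  have := congrArg Fin.val h
  simp [sL, sR] at this

lemma sR_ne_zero {M : ℕ} (h : 0 < M) (m : Fin (M - 1)) : sR M m ≠ ⟨0, h⟩ := by
  intro hh
  have := congrArg Fin.val hh
  simp [sR] at this

lemma par_flip_L {M : ℕ} (m : Fin (M - 1)) {n : Fin M → Bool}
    (h1 : n (sL M m) = true) (h2 : n (sR M m) = false) :
    par (hop M n (sL M m) (sR M m)) = par n + 1 := by
  rw [par_hop h1 h2 (sLR_ne m)]
  have h3 : ((sR M m).1 : ZMod 2) - ((sL M m).1 : ZMod 2) = 1 := by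
    simp only [sL, sR]; push_cast; ring
  rw [sub_eq_add_neg, add_assoc, ← sub_eq_add_neg, h3]

lemma par_flip_R {M : ℕ} (m : Fin (M - 1)) {n : Fin M → Bool}
    (h1 : n (sR M m) = true) (h2 : n (sL M m) = false) :
    par (hop M n (sR M m) (sL M m)) = par n + 1 := by
  rw [par_hop h1 h2 (Ne.symm (sLR_ne m))]
  have h3 : ((sL M m).1 : ZMod 2) - ((sR M m).1 : ZMod 2) = 1 := by
    simp only [sL, sR]; push_cast
    have h4 : (-1 : ZMod 2) = 1 := by decide
    rw [show ((m.1 : ZMod 2) - (m.1 + 1)) = -1 by ring, h4]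
  rw [sub_eq_add_neg, add_assoc, ← sub_eq_add_neg, h3]

lemma step {M : ℕ} (h : 0 < M) (γ J : Fin (M - 1) → ℝ) {p : Cfg M}
    (hp : p ∈ Sc M h 0) :
    (Hgam M γ + HJop M J) (e M p) ∈ Submodule.span ℂ (e M '' ↑(Sc M h 1)) := by
  obtain ⟨h1, h2, h3⟩ : nOcc M p.1 = 1 ∧ p.2 ⟨0, h⟩ = true ∧ par p.1 = 0 := by
    simpa [Sc] using hp
  have memq : ∀ q : Cfg M, q ∈ Sc M h 1 → e M q ∈ Submodule.span ℂ (e M '' ↑(Sc M h 1)) := by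
    intro q hq
    exact Submodule.subset_span ⟨q, hq, rfl⟩
  rw [LinearMap.add_apply, Hgam, HJop, mkOp_apply_e, mkOp_apply_e]
  refine add_mem (neg_mem (Submodule.sum_mem _ fun m _ => Submodule.smul_mem _ _
      (add_mem ?_ ?_))) (Submodule.sum_mem _ fun m _ => Submodule.smul_mem _ _ (add_mem ?_ ?_))
  · split_ifs with hc
    · refine memq _ ?_
      simp only [Sc, mem_filter, mem_univ, true_and]
      exact ⟨by rw [nOcc_hop hc.1 hc.2 (sLR_ne m)]; exact h1, h2,
        by rw [par_flip_L m hc.1 hc.2, h3, zero_add]⟩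
    · exact Submodule.zero_mem _
  · split_ifs with hc
    · refine memq _ ?_
      simp only [Sc, mem_filter, mem_univ, true_and]
      exact ⟨by rw [nOcc_hop hc.1 hc.2 (Ne.symm (sLR_ne m))]; exact h1, h2,
        by rw [par_flip_R m hc.1 hc.2, h3, zero_add]⟩
    · exact Submodule.zero_mem _
  · split_ifs with hc
    · refine memq _ ?_
      simp only [Sc, mem_filter, mem_univ, true_and]
      refine ⟨by rw [nOcc_hop hc.1 hc.2.1 (sLR_ne m)]; exact h1, ?_,
        by rw [par_flip_L m hc.1 hc.2.1, h3, zero_add]⟩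
      rw [Function.update_apply, if_neg (fun hh => sR_ne_zero h m hh.symm)]
      exact h2
    · exact Submodule.zero_mem _
  · split_ifs with hc
    · refine memq _ ?_
      simp only [Sc, mem_filter, mem_univ, true_and]
      refine ⟨by rw [nOcc_hop hc.1 hc.2.1 (Ne.symm (sLR_ne m))]; exact h1, ?_,
        by rw [par_flip_R m hc.1 hc.2.1, h3, zero_add]⟩
      rw [Function.update_apply, if_neg (fun hh => sR_ne_zero h m hh.symm)]
      exact h2
    · exact Submodule.zero_mem _

lemma nOcc_single {M : ℕ} (x : Fin M) : nOcc M (fun m => decide (m = x)) = 1 := by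
  rw [nOcc]
  have h1 : (Finset.univ.filter fun m : Fin M => (decide (m = x)) = true) = {x} := by
    ext m; simp
  rw [h1, card_singleton]

lemma par_single {M : ℕ} (x : Fin M) : par (fun m => decide (m = x)) = (x.1 : ZMod 2) := by
  rw [par]
  simp only [decide_eq_true_eq]
  rw [Finset.sum_ite_eq' Finset.univ x (fun m : Fin M => (m.1 : ZMod 2))]
  simp

lemma single_of_nOcc_one {M : ℕ} {n : Fin M → Bool} (h : nOcc M n = 1) :
    ∃ x : Fin M, n = fun m => decide (m = x) := by
  obtain ⟨x, hx⟩ := Finset.card_eq_one.mp h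
  refine ⟨x, funext fun m => ?_⟩
  have hiff : n m = true ↔ m = x := by
    have h2 : m ∈ Finset.univ.filter (fun m => n m = true) ↔ m ∈ ({x} : Finset (Fin M)) := by
      rw [hx]
    simpa using h2
  rcases hnm : n m with _ | _
  · have h3 : ¬ m = x := fun hh => by rw [hiff.mpr hh] at hnm; exact Bool.noConfusion hnm
    simp [h3]
  · simp [hiff.mp hnm]

def F (M : ℕ) : Fin M × (Fin M → Bool) → Cfg M := fun q => (fun m => decide (m = q.1), q.2)

lemma F_inj (M : ℕ) : Function.Injective (F M) := by
  rintro ⟨x, t⟩ ⟨x', t'⟩ hF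
  have h1 := congrArg Prod.fst hF
  have h2 := congrArg Prod.snd hF
  simp only [F] at h1 h2
  have hxx := congrFun h1 x
  rw [decide_eq_decide] at hxx
  have hx : x = x' := hxx.mp rfl
  simp [Prod.ext_iff, hx, h2]

lemma Sc_eq_image (M : ℕ) (h : 0 < M) (c : ZMod 2) :
    Sc M h c = Finset.image (F M)
      ((Finset.univ.filter fun x : Fin M => (x.1 : ZMod 2) = c) ×ˢ
       (Finset.univ.filter fun t : Fin M → Bool => t ⟨0, h⟩ = true)) := by
  ext p
  simp only [Sc, mem_filter, mem_univ, true_and, Finset.mem_image]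
  constructor
  · rintro ⟨h1, h2, h3⟩
    obtain ⟨x, hx⟩ := single_of_nOcc_one h1
    refine ⟨(x, p.2), ?_, ?_⟩
    · rw [Finset.mem_product]
      refine ⟨?_, ?_⟩ <;> rw [mem_filter]
      · exact ⟨mem_univ _, by rw [← par_single x, ← hx, h3]⟩
      · exact ⟨mem_univ _, h2⟩
    · have hFp : F M (x, p.2) = p := by
        have h1' : (F M (x, p.2)).1 = p.1 := hx.symm
        have h2' : (F M (x, p.2)).2 = p.2 := rfl
        exact Prod.ext h1' h2'
      exact hFp
  · rintro ⟨⟨x, t⟩, hmem, rfl⟩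
    rw [Finset.mem_product, mem_filter, mem_filter] at hmem
    obtain ⟨⟨-, hx⟩, ⟨-, ht⟩⟩ := hmem
    exact ⟨nOcc_single x, ht, by
      rw [show (F M (x, t)).1 = fun m => decide (m = x) from rfl, par_single]; exact hx⟩

lemma Sc_card (M : ℕ) (h : 0 < M) (c : ZMod 2) :
    (Sc M h c).card = (Finset.univ.filter fun x : Fin M => (x.1 : ZMod 2) = c).card *
      (Finset.univ.filter fun t : Fin M → Bool => t ⟨0, h⟩ = true).card := by
  rw [Sc_eq_image M h c, Finset.card_image_of_injective _ (F_inj M), Finset.card_product]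

def G (M : ℕ) (h : 0 < M) : ({ m : Fin M // m ≠ ⟨0, h⟩ } → Bool) → (Fin M → Bool) :=
  fun u m => if hm : m = ⟨0, h⟩ then true else u ⟨m, hm⟩

lemma spin_card (M : ℕ) (h : 0 < M) :
    (Finset.univ.filter fun t : Fin M → Bool => t ⟨0, h⟩ = true).card = 2 ^ (M - 1) := by
  have himg : (Finset.univ.filter fun t : Fin M → Bool => t ⟨0, h⟩ = true)
      = Finset.image (G M h) Finset.univ := by
    ext t
    simp only [mem_filter, mem_univ, true_and, Finset.mem_image]
    constructor
    · intro ht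
      refine ⟨fun m => t m.1, funext fun m => ?_⟩
      rw [G]
      split_ifs with hm
      · rw [hm, ht]
      · rfl
    · rintro ⟨u, rfl⟩
      simp [G]
  have hGinj : Function.Injective (G M h) := by
    intro u u' huu
    funext m
    have h4 := congrFun huu m.1
    rw [G, G, dif_neg m.2, dif_neg m.2] at h4
    exact h4
  rw [himg, Finset.card_image_of_injective _ hGinj, Finset.card_univ, Fintype.card_fun]
  have hc : Fintype.card {m : Fin M // m ≠ ⟨0, h⟩} = M - 1 := by
    simp [Fintype.card_subtype_compl]
  rw [hc, Fintype.card_bool]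

lemma cast_mod_two (k : ℕ) : ((k : ZMod 2) = 0 ↔ k % 2 = 0) ∧ ((k : ZMod 2) = 1 ↔ k % 2 = 1) := by
  have hk : ((k : ZMod 2)) = ((k % 2 : ℕ) : ZMod 2) := (ZMod.natCast_mod k 2).symm
  rcases Nat.mod_two_eq_zero_or_one k with h | h <;> rw [hk, h] <;> simp

lemma pos_card_even (M : ℕ) :
    (Finset.univ.filter fun x : Fin M => (x.1 : ZMod 2) = 0).card = (M + 1) / 2 := by
  have h1 : Finset.image Fin.val (Finset.univ.filter fun x : Fin M => (x.1 : ZMod 2) = 0)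
      = (Finset.range M).filter (fun k => k % 2 = 0) := by
    ext k
    simp only [Finset.mem_image, mem_filter, mem_univ, true_and, Finset.mem_range]
    constructor
    · rintro ⟨x, hx, rfl⟩
      exact ⟨x.2, ((cast_mod_two x.1).1).mp hx⟩
    · rintro ⟨hk, hk2⟩
      exact ⟨⟨k, hk⟩, ((cast_mod_two k).1).mpr hk2, rfl⟩
  have h2 : (Finset.range M).filter (fun k => k % 2 = 0)
      = Finset.image (fun j => 2 * j) (Finset.range ((M + 1) / 2)) := by
    ext k
    simp only [mem_filter, Finset.mem_range, Finset.mem_image]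
    constructor
    · rintro ⟨hk, hk2⟩
      exact ⟨k / 2, by omega, by omega⟩
    · rintro ⟨j, hj, rfl⟩
      omega
  have h3 := Finset.card_image_of_injective
    (Finset.univ.filter fun x : Fin M => (x.1 : ZMod 2) = 0) Fin.val_injective
  rw [h1, h2] at h3
  rw [← h3, Finset.card_image_of_injective _ (fun a b hab => by omega), Finset.card_range]

lemma pos_card_odd (M : ℕ) :
    (Finset.univ.filter fun x : Fin M => (x.1 : ZMod 2) = 1).card = M / 2 := by
  have h1 : Finset.image Fin.val (Finset.univ.filter fun x : Fin M => (x.1 : ZMod 2) = 1)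
      = (Finset.range M).filter (fun k => k % 2 = 1) := by
    ext k
    simp only [Finset.mem_image, mem_filter, mem_univ, true_and, Finset.mem_range]
    constructor
    · rintro ⟨x, hx, rfl⟩
      exact ⟨x.2, ((cast_mod_two x.1).2).mp hx⟩
    · rintro ⟨hk, hk2⟩
      exact ⟨⟨k, hk⟩, ((cast_mod_two k).2).mpr hk2, rfl⟩
  have h2 : (Finset.range M).filter (fun k => k % 2 = 1)
      = Finset.image (fun j => 2 * j + 1) (Finset.range (M / 2)) := by
    ext k
    simp only [mem_filter, Finset.mem_range, Finset.mem_image]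
    constructor
    · rintro ⟨hk, hk2⟩
      exact ⟨k / 2, by omega, by omega⟩
    · rintro ⟨j, hj, rfl⟩
      omega
  have h3 := Finset.card_image_of_injective
    (Finset.univ.filter fun x : Fin M => (x.1 : ZMod 2) = 1) Fin.val_injective
  rw [h1, h2] at h3
  rw [← h3, Finset.card_image_of_injective _ (fun a b hab => by omega), Finset.card_range]

lemma Sc_card_sub (M : ℕ) (h : 0 < M) (hodd : Odd M) :
    (Sc M h 0).card = (Sc M h 1).card + 2 ^ (M - 1) := by
  rw [Sc_card, Sc_card, spin_card, pos_card_even, pos_card_odd]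
  obtain ⟨r, rfl⟩ := hodd
  have h5 : (2 * r + 1 + 1) / 2 = (2 * r + 1) / 2 + 1 := by omega
  rw [h5, Nat.succ_mul]

lemma e_inj (M : ℕ) : Function.Injective (e M) := by
  intro p q hpq
  by_contra hne
  have h1 := congrFun hpq p
  rw [e, e, Pi.single_eq_same, Pi.single_eq_of_ne hne] at h1
  exact one_ne_zero h1

end QB10

/-- for odd chain length `M` and nonvanishing hoppings
`γ_m ≠ 0` (with `J` arbitrary, possibly non-uniform), the kernel of
`H_γ + H_J` restricted to the single-fermion sector `W₁^↑` has dimension at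
least `2^{M−1}`: exponentially many exact zero modes. -/

theorem odd_chain_zero_modes_Q1 (M : ℕ) (hM : 2 ≤ M) (hodd : Odd M)
    (γ J : Fin (M - 1) → ℝ) (hγ : ∀ m, γ m ≠ 0) :
    2 ^ (M - 1) ≤ Module.finrank ℂ
      ↥(sectorUp M (by omega) 1 ⊓ LinearMap.ker (Hgam M γ + HJop M J)) := by
  classical
  have h0 : 0 < M := by omega
  set A := Hgam M γ + HJop M J with hA
  set S0 := QB10.Sc M h0 0 with hS0
  set S1 := QB10.Sc M h0 1 with hS1
  set U : Submodule ℂ (V M) := Submodule.span ℂ (e M '' ↑S0) with hU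
  set Wo : Submodule ℂ (V M) := Submodule.span ℂ (e M '' ↑S1) with hWo
  have hUle : U ≤ sectorUp M (by omega) 1 := by
    rw [hU, Submodule.span_le]
    rintro v ⟨p, hp, rfl⟩
    obtain ⟨h1, h2, h3⟩ : nOcc M p.1 = 1 ∧ p.2 ⟨0, h0⟩ = true ∧ QB10.par p.1 = 0 := by
      simpa [QB10.Sc, hS0] using hp
    exact Submodule.subset_span ⟨p, h1, h2, rfl⟩
  have hmapU : Submodule.map A U ≤ Wo := by
    rw [hU, Submodule.map_span, Submodule.span_le]
    rintro v ⟨w, ⟨p, hp, rfl⟩, rfl⟩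
    exact QB10.step h0 γ J hp
  set T : U →ₗ[ℂ] V M := A.domRestrict U with hT
  have hrange : LinearMap.range T ≤ Wo := by
    rintro v ⟨⟨u, hu⟩, rfl⟩
    exact hmapU ⟨u, hu, rfl⟩
  have hli : LinearIndependent ℂ (fun v : (e M '' ↑S0 : Set (V M)) => (v : V M)) := by
    have hb := (Pi.basisFun ℂ (Cfg M)).linearIndependent
    have hsub : (e M '' ↑S0 : Set (V M)) ⊆ Set.range (Pi.basisFun ℂ (Cfg M)) := by
      rintro v ⟨p, hp, rfl⟩
      exact ⟨p, by rw [Pi.basisFun_apply]; rfl⟩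
    exact LinearIndepOn.mono (v := id) ((linearIndepOn_id_range_iff hb.injective).mpr hb) hsub
  have hfrU : Module.finrank ℂ U = S0.card := by
    rw [hU, finrank_span_set_eq_card hli, Set.toFinset_image,
      Finset.card_image_of_injective _ (QB10.e_inj M)]
    congr 1
    ext p
    simp
  have hli1 : LinearIndependent ℂ (fun v : (e M '' ↑S1 : Set (V M)) => (v : V M)) := by
    have hb := (Pi.basisFun ℂ (Cfg M)).linearIndependent
    have hsub : (e M '' ↑S1 : Set (V M)) ⊆ Set.range (Pi.basisFun ℂ (Cfg M)) := by
      rintro v ⟨p, hp, rfl⟩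
      exact ⟨p, by rw [Pi.basisFun_apply]; rfl⟩
    exact LinearIndepOn.mono (v := id) ((linearIndepOn_id_range_iff hb.injective).mpr hb) hsub
  have hfrWo : Module.finrank ℂ Wo ≤ S1.card := by
    rw [hWo, finrank_span_set_eq_card hli1, Set.toFinset_image,
      Finset.card_image_of_injective _ (QB10.e_inj M)]
    apply le_of_eq
    congr 1
    ext p
    simp
  have hrn := LinearMap.finrank_range_add_finrank_ker T
  have hrt : Module.finrank ℂ (LinearMap.range T) ≤ S1.card :=
    le_trans (Submodule.finrank_mono hrange) hfrWo
  set K := sectorUp M (by omega : 0 < M) 1 ⊓ LinearMap.ker A with hK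
  have hmemK : ∀ x : LinearMap.ker T, ((x.1 : U) : V M) ∈ K := by
    rintro ⟨⟨u, hu⟩, hx⟩
    refine Submodule.mem_inf.mpr ⟨hUle hu, ?_⟩
    rw [LinearMap.mem_ker] at hx ⊢
    rw [hT, LinearMap.domRestrict_apply] at hx
    exact hx
  set φ : LinearMap.ker T →ₗ[ℂ] K :=
    LinearMap.codRestrict K ((U.subtype).comp (Submodule.subtype (LinearMap.ker T))) hmemK with hφ
  have hφinj : Function.Injective φ := by
    intro a b hab
    have h1 : ((a.1 : U) : V M) = ((b.1 : U) : V M) := congrArg (Subtype.val : ↥K → V M) hab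
    exact Subtype.ext (Subtype.ext h1)
  have hle := LinearMap.finrank_le_finrank_of_injective hφinj
  have hcard : S0.card = S1.card + 2 ^ (M - 1) := QB10.Sc_card_sub M h0 hodd
  omega
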